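/- arXiv:1705.03492 — 3 statements merged into one kernel-verified Lean document; each statement's English description precedes it below -/
import Mathlib

section
/- Let F be a field with char F ≠ 2, A a commutative (not necessarily associative or unital) F-algebra, η ∈ F with η ∉ {0,1}, and a ∈ A an η-axis. Then the map τ_a : A → A defined by x ↦ x₊ − x₋, where x = x₊ + x₋ with x₊ ∈ A_1(a) ⊕ A_0(a) and x₋ ∈ A_η(a), is an algebra automorphism of A satisfying τ_a ∘ τ_a = id. -/
universe u v

section Prelim

variable (F : Type u) {A : Type v} [Field F] [NonUnitalNonAssocCommRing A]
  [Module F A] [SMulCommClass F A A] [IsScalarTower F A A]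

/-- The λ-eigenspace of the adjoint map `ad_a : x ↦ a * x`. -/
def eigSp (a : A) (l : F) : Submodule F A where
  carrier := {x | a * x = l • x}
  add_mem' := by
    intro x y hx hy
    simp only [Set.mem_setOf_eq] at *
    rw [mul_add, hx, hy, smul_add]
  zero_mem' := by simp
  smul_mem' := by
    intro c x hx
    simp only [Set.mem_setOf_eq] at *
    rw [mul_smul_comm, hx, smul_smul, smul_smul, mul_comm]

/-- `a` is a (primitive) `η`-axis. -/
structure IsAxis (η : F) (a : A) : Prop where
  ne_zero : a ≠ 0
  idem : a * a = a
  decomp : eigSp F a 1 ⊔ eigSp F a 0 ⊔ eigSp F a η = ⊤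
  prim : eigSp F a 1 = Submodule.span F {a}
  f11 : ∀ x ∈ eigSp F a 1, ∀ y ∈ eigSp F a 1, x * y ∈ eigSp F a 1
  f00 : ∀ x ∈ eigSp F a 0, ∀ y ∈ eigSp F a 0, x * y ∈ eigSp F a 0
  f10 : ∀ x ∈ eigSp F a 1, ∀ y ∈ eigSp F a 0, x * y = 0
  fpe : ∀ x ∈ eigSp F a 1 ⊔ eigSp F a 0, ∀ y ∈ eigSp F a η, x * y ∈ eigSp F a η
  fee : ∀ x ∈ eigSp F a η, ∀ y ∈ eigSp F a η, x * y ∈ eigSp F a 1 ⊔ eigSp F a 0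

/-- `τ` is the Miyamoto involution of the `η`-axis `a`. -/
structure IsMiyamoto (η : F) (a : A) (τ : A → A) : Prop where
  fixes : ∀ x ∈ eigSp F a 1 ⊔ eigSp F a 0, τ x = x
  negates : ∀ x ∈ eigSp F a η, τ x = -x
  map_add : ∀ x y : A, τ (x + y) = τ x + τ y
  map_smul : ∀ (c : F) (x : A), τ (c • x) = c • τ x
  map_mul : ∀ x y : A, τ (x * y) = τ x * τ y
  bijective : Function.Bijective τ

/-- `c = φ_a(u)`, the projection of `u` to `F·a` w.r.t. the axis `a`. -/
def IsProjCoeff (η : F) (a u : A) (c : F) : Prop :=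
  ∃ u0 ∈ eigSp F a 0, ∃ ue ∈ eigSp F a η, u = c • a + u0 + ue

/-- `e` is an identity element of the subalgebra `N`. -/
def IsIdentOf (N : NonUnitalSubalgebra F A) (e : A) : Prop :=
  e ∈ N ∧ ∀ z ∈ N, e * z = z

/-- `ψ` is an `F`-algebra automorphism of `A`. -/
structure IsAlgAut (ψ : A → A) : Prop where
  map_add : ∀ x y : A, ψ (x + y) = ψ x + ψ y
  map_smul : ∀ (c : F) (x : A), ψ (c • x) = c • ψ x
  map_mul : ∀ x y : A, ψ (x * y) = ψ x * ψ y
  bijective : Function.Bijective ψ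

/-- The graph `Δ_𝒜`: distinct axes are adjacent iff their product is nonzero. -/
def axesGraph (𝒜 : Set A) : SimpleGraph 𝒜 where
  Adj x y := x ≠ y ∧ (x : A) * (y : A) ≠ 0
  symm := by
    constructor
    rintro x y ⟨hxy, hm⟩
    exact ⟨hxy.symm, by rwa [mul_comm]⟩
  loopless := by constructor; rintro x ⟨h, -⟩; exact h rfl

/-- Multiplication of the Jordan algebra of Clifford type `J(V,B) = F·e ⊕ V`. -/
def cliffMul {V : Type*} [AddCommGroup V] [Module F V]
    (B : V →ₗ[F] V →ₗ[F] F) (x y : F × V) : F × V :=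
  (x.1 * y.1 + B x.2 y.2, x.1 • y.2 + y.1 • x.2)

end Prelim

/-- An isomorphism of `A` with a Jordan algebra of Clifford type `J(V,B)`. -/
structure CliffordTypeIso (F : Type u) (A : Type v) [Field F]
    [NonUnitalNonAssocCommRing A] [Module F A] [SMulCommClass F A A]
    [IsScalarTower F A A] where
  V : Type v
  [instAdd : AddCommGroup V]
  [instMod : Module F V]
  B : V →ₗ[F] V →ₗ[F] F
  symm : ∀ v w : V, B v w = B w v
  iso : A ≃ₗ[F] F × V
  mul_compat : ∀ x y : A, iso (x * y) = cliffMul F B (iso x) (iso y)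
/-- For an `η`-axis `a` in a commutative nonassociative `F`-algebra
`A`, the map `τ_a : x ↦ x₊ − x₋` (where `x = x₊ + x₋` with
`x₊ ∈ A₁(a) ⊕ A₀(a)` and `x₋ ∈ A_η(a)`) is an algebra automorphism of `A`
with `τ_a ∘ τ_a = id`. -/
theorem miyamoto_automorphism
    {F : Type u} {A : Type v} [Field F] [NonUnitalNonAssocCommRing A]
    [Module F A] [SMulCommClass F A A] [IsScalarTower F A A]
    (hchar : (2 : F) ≠ 0) (η : F) (hη0 : η ≠ 0) (hη1 : η ≠ 1)
    (a : A) (ha : IsAxis F η a) :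
    ∃ τ : A → A,
      (∀ xp ∈ eigSp F a 1 ⊔ eigSp F a 0, ∀ xm ∈ eigSp F a η,
        τ (xp + xm) = xp - xm) ∧
      IsAlgAut F τ ∧ τ ∘ τ = id := by
  set P := eigSp F a 1 ⊔ eigSp F a 0 with hPdef
  set Q := eigSp F a η with hQdef
  -- Disjointness
  have hdis : Disjoint P Q := by
    rw [Submodule.disjoint_def]
    intro x hxP hxQ
    have hax : a * x = η • x := hxQ
    obtain ⟨x1, hx1, x0, hx0, rfl⟩ := Submodule.mem_sup.mp hxP
    have h1 : a * x1 = x1 := by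
      have : a * x1 = (1 : F) • x1 := hx1
      simpa using this
    have h0 : a * x0 = 0 := by
      have : a * x0 = (0 : F) • x0 := hx0
      simpa using this
    have hx1eq : x1 = η • (x1 + x0) := by
      have h3 : a * (x1 + x0) = x1 := by rw [mul_add, h1, h0, add_zero]
      exact h3.symm.trans hax
    have h2 : x1 = η • x1 := by
      calc x1 = a * x1 := h1.symm
        _ = a * (η • (x1 + x0)) := by rw [← hx1eq]
        _ = η • (a * (x1 + x0)) := mul_smul_comm η a (x1 + x0)
        _ = η • x1 := by rw [mul_add, h1, h0, add_zero]
    have hx1z : x1 = 0 := by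
      have : (1 - η) • x1 = 0 := by rw [sub_smul, one_smul, ← h2, sub_self]
      have h1η : (1 : F) - η ≠ 0 := sub_ne_zero.mpr (Ne.symm hη1)
      exact (smul_eq_zero.mp this).resolve_left h1η
    have hx0z : x0 = 0 := by
      have : η • x0 = 0 := by
        have h4 := hx1eq
        rw [hx1z, smul_add, smul_zero, zero_add] at h4
        exact h4.symm
      exact (smul_eq_zero.mp this).resolve_left hη0
    rw [hx1z, hx0z, add_zero]
  have hc : IsCompl P Q := ⟨hdis, codisjoint_iff.mpr ha.decomp⟩
  -- products stay in the right pieces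
  have hPP : ∀ x ∈ P, ∀ y ∈ P, x * y ∈ P := by
    intro x hx y hy
    obtain ⟨x1, hx1, x0, hx0, rfl⟩ := Submodule.mem_sup.mp hx
    obtain ⟨y1, hy1, y0, hy0, rfl⟩ := Submodule.mem_sup.mp hy
    have h10 : x1 * y0 = 0 := ha.f10 _ hx1 _ hy0
    have h01 : x0 * y1 = 0 := by rw [mul_comm]; exact ha.f10 _ hy1 _ hx0
    have hexp : (x1 + x0) * (y1 + y0) = x1 * y1 + x0 * y0 := by
      rw [add_mul, mul_add, mul_add, h10, h01]; abel
    rw [hexp]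
    exact Submodule.add_mem_sup (ha.f11 _ hx1 _ hy1) (ha.f00 _ hx0 _ hy0)
  -- the projection and τ
  set p := Submodule.projectionOnto P Q hc with hp
  set τ := fun x : A => ((p x : A)) - (x - (p x : A)) with hτ
  have hτkey : ∀ xp ∈ P, ∀ xm ∈ Q, τ (xp + xm) = xp - xm := by
    intro xp hxp xm hxm
    have hproj : (p (xp + xm) : A) = xp := by
      have : p (xp + xm) = p xp + p xm := map_add p _ _
      rw [this, Submodule.projectionOnto_apply_left hc ⟨xp, hxp⟩,
        Submodule.projectionOnto_apply_of_mem_right hc hxm]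
      simp
    simp only [hτ, hproj]
    abel
  have hdec : ∀ x : A, ∃ xp ∈ P, ∃ xm ∈ Q, x = xp + xm := by
    intro x
    have : x ∈ P ⊔ Q := by rw [codisjoint_iff.mp hc.codisjoint]; trivial
    obtain ⟨xp, hxp, xm, hxm, hsum⟩ := Submodule.mem_sup.mp this
    exact ⟨xp, hxp, xm, hxm, hsum.symm⟩
  have hinv : Function.Involutive τ := by
    intro x
    obtain ⟨xp, hxp, xm, hxm, rfl⟩ := hdec x
    rw [hτkey xp hxp xm hxm, sub_eq_add_neg,
      hτkey xp hxp (-xm) (neg_mem hxm), sub_neg_eq_add]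
  refine ⟨τ, hτkey, ⟨?_, ?_, ?_, hinv.bijective⟩, hinv.comp_self⟩
  · intro x y
    simp only [hτ, map_add]
    push_cast
    abel
  · intro c x
    simp only [hτ, map_smul]
    push_cast
    rw [smul_sub, smul_sub]
  · intro x y
    obtain ⟨xp, hxp, xm, hxm, rfl⟩ := hdec x
    obtain ⟨yp, hyp, ym, hym, rfl⟩ := hdec y
    have hmul : (xp + xm) * (yp + ym) =
        (xp * yp + xm * ym) + (xp * ym + xm * yp) := by
      rw [add_mul, mul_add, mul_add]; abel
    have hPpart : xp * yp + xm * ym ∈ P :=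
      add_mem (hPP _ hxp _ hyp) (ha.fee _ hxm _ hym)
    have hQpart : xp * ym + xm * yp ∈ Q := by
      refine add_mem (ha.fpe _ hxp _ hym) ?_
      rw [mul_comm]
      exact ha.fpe _ hyp _ hxm
    rw [hmul, hτkey _ hPpart _ hQpart, hτkey xp hxp xm hxm,
      hτkey yp hyp ym hym]
    rw [sub_mul, mul_sub, mul_sub]
    abel
end

section
/- Let A be a primitive axial algebra of Jordan type 1/2 over a field F with char F ≠ 2, generated by a set 𝒜 of (1/2)-axes. Assume A contains two (1/2)-axes a, b ∈ 𝒜 such that a + b is an identity element e of A, and that for every c ∈ 𝒜 the product v_a v_c lies in F·e, where v_x = x − (1/2)e. Then A is isomorphic as an F-algebra to a Jordan algebra of Clifford type J(V,B) for some F-vector space V with symmetric bilinear form B. -/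
universe u v

section Helpers

variable {F : Type u} {A : Type v} [Field F] [NonUnitalNonAssocCommRing A]
  [Module F A] [SMulCommClass F A A] [IsScalarTower F A A]

private lemma mem_eigSp {a x : A} {l : F} : x ∈ eigSp F a l ↔ a * x = l • x := Iff.rfl

private lemma smul_cancel {s : F} {x : A} (hs : s ≠ 0) (h : s • x = 0) : x = 0 := by
  have h2 := congrArg (fun w => s⁻¹ • w) h
  simpa [smul_smul, inv_mul_cancel₀ hs] using h2

private lemma eig_indep (h2 : (2 : F) ≠ 0) {c x y z : A}
    (hx : c * x = x) (hy : c * y = 0) (hz : c * z = (1/2 : F) • z)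
    (hsum : x + y + z = 0) : x = 0 ∧ y = 0 ∧ z = 0 := by
  have e1 : x + (1/2 : F) • z = 0 := by
    have h := congrArg (fun w => c * w) hsum
    simpa [mul_add, hx, hy, hz] using h
  have e2 : x + ((1/2 : F) * (1/2 : F)) • z = 0 := by
    have h := congrArg (fun w => c * w) e1
    simpa [mul_add, hx, hz, mul_smul_comm, smul_smul] using h
  have e3 : ((1/2 : F) * (1/2 : F)) • z = (1/2 : F) • z := add_left_cancel (e2.trans e1.symm)
  have e4 : (1/2 : F) • z = z := by
    have h := congrArg (fun w => (2 : F) • w) e3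
    simpa [smul_smul, ← mul_assoc, mul_inv_cancel₀ h2] using h
  have e5 : z = 0 := by
    have e6 : z = (2 : F) • z := by
      have h := congrArg (fun w => (2 : F) • w) e4
      simpa [smul_smul, mul_inv_cancel₀ h2] using h
    have h7 : ((2 : F) - 1) • z = 0 := by rw [sub_smul, one_smul, ← e6, sub_self]
    have h8 : (1 : F) • z = 0 := by rw [show (1 : F) = 2 - 1 by ring]; exact h7
    simpa using h8
  have e7 : x = 0 := by simpa [e5] using e1
  refine ⟨e7, ?_, e5⟩
  simpa [e7, e5] using hsum

private lemma axis_decomp {c : A} (hax : IsAxis F (1/2 : F) c) (x : A) :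
    ∃ (γ : F) (y z : A), y ∈ eigSp F c 0 ∧ z ∈ eigSp F c (1/2 : F) ∧
      x = γ • c + y + z := by
  have hx : x ∈ eigSp F c 1 ⊔ eigSp F c 0 ⊔ eigSp F c (1/2 : F) := by
    rw [hax.decomp]; trivial
  rcases Submodule.mem_sup.mp hx with ⟨u, hu, z, hz, hxz⟩
  rcases Submodule.mem_sup.mp hu with ⟨w, hw, y, hy, huy⟩
  rw [hax.prim] at hw
  rcases Submodule.mem_span_singleton.mp hw with ⟨γ, hγ⟩
  exact ⟨γ, y, z, hy, hz, by rw [← hxz, ← huy, hγ]⟩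

end Helpers

/-- Let `A` be a primitive axial algebra of Jordan type `1/2`
generated by a set `𝒜` of `(1/2)`-axes.  If `A` contains two `(1/2)`-axes
`a, b ∈ 𝒜` with `a + b` an identity element `e` of `A`, and `v_a v_c ∈ F·e`
for all `c ∈ 𝒜` (where `v_x = x − (1/2)e`), then `A` is isomorphic to a
Jordan algebra of Clifford type `J(V,B)`. -/
theorem clifford_type_criterion
    {F : Type u} {A : Type v} [Field F] [NonUnitalNonAssocCommRing A]
    [Module F A] [SMulCommClass F A A] [IsScalarTower F A A]
    (hchar : (2 : F) ≠ 0)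
    (𝒜 : Set A) (h𝒜 : ∀ a ∈ 𝒜, IsAxis F (1 / 2 : F) a)
    (hgen : NonUnitalAlgebra.adjoin F 𝒜 = ⊤)
    (a b : A) (ha : a ∈ 𝒜) (hb : b ∈ 𝒜)
    (hident : ∀ x : A, (a + b) * x = x)
    (hvv : ∀ c ∈ 𝒜, ∃ k : F,
      (a - (1 / 2 : F) • (a + b)) * (c - (1 / 2 : F) • (a + b)) = k • (a + b)) :
    Nonempty (CliffordTypeIso F A) := by
  classical
  set e : A := a + b with hedef
  have haxA := h𝒜 a ha
  have haxB := h𝒜 b hb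
  have hid : ∀ x : A, e * x = x := hident
  have hid' : ∀ x : A, x * e = x := fun x => by rw [mul_comm]; exact hid x
  have haa : a * a = a := haxA.idem
  have hbb : b * b = b := haxB.idem
  have ha0 : a ≠ 0 := haxA.ne_zero
  have hb0 : b ≠ 0 := haxB.ne_zero
  have hee : e * e = e := hid e
  have hba : b * a = 0 := by
    have h := hid a
    rw [hedef, add_mul, haa, add_eq_left] at h
    exact h
  have hab : a * b = 0 := by rw [mul_comm]; exact hba
  have h12 : (1/2 : F) ≠ 0 := one_div_ne_zero hchar
  have hhalf : (1/2 : F) + (1/2 : F) = 1 := by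
    rw [← add_div, show (1:F)+1 = 2 from by norm_num, div_self hchar]
  have hbH : ∀ z ∈ eigSp F a (1/2:F), b * z = (1/2:F) • z := by
    intro z hz
    have haz : a * z = (1/2:F) • z := mem_eigSp.mp hz
    have h := hid z
    rw [hedef, add_mul, haz] at h
    have h2 : b * z = z - (1/2:F) • z := by
      rw [eq_sub_iff_add_eq, add_comm]; exact h
    rw [h2, sub_eq_iff_eq_add, ← add_smul, hhalf, one_smul]
  have indep3 : ∀ (s t : F) (z : A), z ∈ eigSp F a (1/2:F) →
      s • a + t • b + z = 0 → s = 0 ∧ t = 0 ∧ z = 0 := by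
    intro s t z hz hsum
    have hx : a * (s • a) = s • a := by rw [mul_smul_comm, haa]
    have hy : a * (t • b) = 0 := by rw [mul_smul_comm, hab, smul_zero]
    obtain ⟨h1, h2, h3⟩ := eig_indep hchar hx hy (mem_eigSp.mp hz) hsum
    have hs : s = 0 := by
      by_contra hs; exact ha0 (smul_cancel hs h1)
    have ht : t = 0 := by
      by_contra ht; exact hb0 (smul_cancel ht h2)
    exact ⟨hs, ht, h3⟩
  have eig0b : ∀ x : A, a * x = 0 → ∃ t : F, x = t • b := by
    intro x hx
    have hbx : x ∈ eigSp F b 1 := by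
      rw [mem_eigSp, one_smul]
      have h := hid x
      rw [hedef, add_mul, hx, zero_add] at h
      exact h
    rw [haxB.prim] at hbx
    obtain ⟨t, ht⟩ := Submodule.mem_span_singleton.mp hbx
    exact ⟨t, ht.symm⟩
  have decompA : ∀ x : A, ∃ (s t : F) (z : A), z ∈ eigSp F a (1/2:F) ∧
      x = s • a + t • b + z := by
    intro x
    obtain ⟨γ, y, z, hy, hz, hx⟩ := axis_decomp haxA x
    obtain ⟨t, ht⟩ := eig0b y (by simpa using mem_eigSp.mp hy)
    exact ⟨γ, t, z, hz, by rw [hx, ht]⟩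
  have vamul0 : ∀ x : A, (a - (1/2:F) • e) * x = a * x - (1/2:F) • x := by
    intro x
    rw [sub_mul, smul_mul_assoc, hid]
  have axForm : ∀ c ∈ 𝒜, ∃ (μ : F) (h : A), h ∈ eigSp F a (1/2:F) ∧
      c = μ • a + (1-μ) • b + h := by
    intro c hc
    obtain ⟨s, t, z, hzH, hcd⟩ := decompA c
    obtain ⟨k, hk⟩ := hvv c hc
    have haz : a * z = (1/2:F) • z := mem_eigSp.mp hzH
    have hac : a * c = s • a + (1/2:F) • z := by
      rw [hcd, mul_add, mul_add, mul_smul_comm, mul_smul_comm, haa, hab, haz,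
        smul_zero, add_zero]
    rw [vamul0, mul_sub, mul_smul_comm, hid' a, hac, hcd, hedef] at hk
    have hk3 : (s - (1/2:F) - (1/2:F)*s + (1/2:F)*(1/2:F) - k) • a
        + ((1/2:F)*(1/2:F) - (1/2:F)*t - k) • b + (0:A) = 0 := by
      linear_combination (norm := module) hk
    obtain ⟨hE1, hE2, -⟩ := indep3 _ _ 0 (zero_mem _) hk3
    refine ⟨s, z, hzH, ?_⟩
    have hts : t = 1 - s := by
      linear_combination 2*hE1 - 2*hE2 + (1+s-t)*hhalf
    rw [hcd, hts]
  have keyF : ∀ c ∈ 𝒜, ∀ (μ : F) (h : A), h ∈ eigSp F a (1/2:F) →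
      c = μ • a + (1-μ) • b + h →
      ∀ x ∈ eigSp F a (1/2:F), ∃ k : F, h * x = k • e := by
    intro c hc μ h hH hcf x hx
    by_cases hh0 : h = 0
    · exact ⟨0, by rw [hh0, zero_mul, zero_smul]⟩
    have hcax := h𝒜 c hc
    have hah : a * h = (1/2:F) • h := mem_eigSp.mp hH
    have hbh : b * h = (1/2:F) • h := hbH h hH
    have hax' : a * x = (1/2:F) • x := mem_eigSp.mp hx
    have hbx' : b * x = (1/2:F) • x := hbH x hx
    have hcx : h * x = c * x - (1/2:F) • x := by
      rw [hcf, add_mul, add_mul, smul_mul_assoc, smul_mul_assoc, hax', hbx']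
      module
    have hfe : h * x ∈ eigSp F a 1 ⊔ eigSp F a 0 := haxA.fee h hH x hx
    obtain ⟨u1, hu1, u0, hu0, huu⟩ := Submodule.mem_sup.mp hfe
    rw [haxA.prim] at hu1
    obtain ⟨p, hp⟩ := Submodule.mem_span_singleton.mp hu1
    obtain ⟨q, hq⟩ := eig0b u0 (by simpa using mem_eigSp.mp hu0)
    have hw : h * x = p • a + q • b := by rw [← huu, ← hp, hq]
    obtain ⟨γ, y, z, hy, hz, hxd⟩ := axis_decomp hcax x
    have hcy : c * y = 0 := by simpa using mem_eigSp.mp hy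
    have hcz : c * z = (1/2:F) • z := mem_eigSp.mp hz
    have hcx2 : c * x = γ • c + (1/2:F) • z := by
      rw [hxd, mul_add, mul_add, mul_smul_comm, hcax.idem, hcy, hcz, add_zero]
    have hha : h * a = (1/2:F) • h := by rw [mul_comm]; exact hah
    have hhb : h * b = (1/2:F) • h := by rw [mul_comm]; exact hbh
    have hca : c * a = μ • a + (1/2:F) • h := by
      rw [hcf, add_mul, add_mul, smul_mul_assoc, smul_mul_assoc, haa, hba, hha,
        smul_zero, add_zero]
    have hcb : c * b = (1-μ) • b + (1/2:F) • h := by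
      rw [hcf, add_mul, add_mul, smul_mul_assoc, smul_mul_assoc, hab, hbb, hhb,
        smul_zero, zero_add]
    have hcomb : p • a + q • b = c * x - (1/2:F) • x := hw.symm.trans hcx
    have hkey : (μ*p) • a + ((1-μ)*q) • b + ((1/2:F)*(p+q)) • h
        = (γ - (1/2:F)*γ) • c := by
      have h0 := congrArg (fun w => c * w) hcomb
      simp only [mul_add, mul_sub, mul_smul_comm, hca, hcb, hcx2, hcax.idem, hcz] at h0
      linear_combination (norm := module) h0
    have hkey2 : (μ*p - (γ - (1/2:F)*γ)*μ) • a
        + ((1-μ)*q - (γ - (1/2:F)*γ)*(1-μ)) • b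
        + ((1/2:F)*(p+q) - (γ - (1/2:F)*γ)) • h = 0 := by
      rw [hcf] at hkey
      linear_combination (norm := module) hkey
    obtain ⟨hA, hB, hH0⟩ := indep3 _ _ _ (Submodule.smul_mem _ _ hH) hkey2
    have hC : (1/2:F)*(p+q) - (γ - (1/2:F)*γ) = 0 := by
      by_contra hne; exact hh0 (smul_cancel hne hH0)
    have hpq : p = q := by
      by_cases hmu : μ = 0
      · have h1 : (1:F) - μ ≠ 0 := by rw [hmu, sub_zero]; exact one_ne_zero
        have h2 : (1-μ) * (q - (γ - (1/2:F)*γ)) = 0 := by linear_combination hB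
        have h3 := (mul_eq_zero.mp h2).resolve_left h1
        linear_combination 2*hC - 2*h3 - (p+q)*hhalf
      · have h2 : μ * (p - (γ - (1/2:F)*γ)) = 0 := by linear_combination hA
        have h3 := (mul_eq_zero.mp h2).resolve_left hmu
        linear_combination -(2*hC) + 2*h3 + (p+q)*hhalf
    refine ⟨p, ?_⟩
    rw [hw, ← hpq, hedef, smul_add]
  have hP : ∀ x : A, ∃ (s t : F) (m : A), (m ∈ eigSp F a (1/2:F) ∧
      ∀ y ∈ eigSp F a (1/2:F), ∃ k : F, m * y = k • e) ∧ x = s • a + t • b + m := by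
    intro x
    have hx : x ∈ NonUnitalAlgebra.adjoin F 𝒜 := by rw [hgen]; trivial
    induction hx using NonUnitalAlgebra.adjoin_induction with
    | mem c hc =>
        obtain ⟨μ, h, hH, hcf⟩ := axForm c hc
        exact ⟨μ, 1-μ, h, ⟨hH, keyF c hc μ h hH hcf⟩, hcf⟩
    | zero =>
        exact ⟨0, 0, 0, ⟨zero_mem _, fun y hy => ⟨0, by rw [zero_mul, zero_smul]⟩⟩,
          by simp⟩
    | add x y hx hy ihx ihy =>
        obtain ⟨s, t, m, ⟨hmH, hmP⟩, hxe⟩ := ihx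
        obtain ⟨s', t', m', ⟨hmH', hmP'⟩, hye⟩ := ihy
        refine ⟨s+s', t+t', m+m', ⟨add_mem hmH hmH', fun y' hy' => ?_⟩, ?_⟩
        · obtain ⟨k, hk⟩ := hmP y' hy'
          obtain ⟨k', hk'⟩ := hmP' y' hy'
          exact ⟨k+k', by rw [add_mul, hk, hk', add_smul]⟩
        · rw [hxe, hye]; module
    | smul r x hx ih =>
        obtain ⟨s, t, m, ⟨hmH, hmP⟩, hxe⟩ := ih
        refine ⟨r*s, r*t, r • m, ⟨Submodule.smul_mem _ _ hmH, fun y' hy' => ?_⟩, ?_⟩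
        · obtain ⟨k, hk⟩ := hmP y' hy'
          exact ⟨r*k, by rw [smul_mul_assoc, hk, smul_smul]⟩
        · rw [hxe]; module
    | mul x y hx hy ihx ihy =>
        obtain ⟨s, t, m, ⟨hmH, hmP⟩, hxe⟩ := ihx
        obtain ⟨s', t', m', ⟨hmH', hmP'⟩, hye⟩ := ihy
        obtain ⟨k, hk⟩ := hmP m' hmH'
        have ham : a * m = (1/2:F) • m := mem_eigSp.mp hmH
        have hbm : b * m = (1/2:F) • m := hbH m hmH
        have ham' : a * m' = (1/2:F) • m' := mem_eigSp.mp hmH'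
        have hbm' : b * m' = (1/2:F) • m' := hbH m' hmH'
        have hma : m * a = (1/2:F) • m := by rw [mul_comm]; exact ham
        have hmb : m * b = (1/2:F) • m := by rw [mul_comm]; exact hbm
        refine ⟨s*s' + k, t*t' + k,
          ((s+t)*(1/2:F)) • m' + ((s'+t')*(1/2:F)) • m,
          ⟨add_mem (Submodule.smul_mem _ _ hmH') (Submodule.smul_mem _ _ hmH),
            fun y' hy' => ?_⟩, ?_⟩
        · obtain ⟨k1, hk1⟩ := hmP' y' hy'
          obtain ⟨k2, hk2⟩ := hmP y' hy'
          refine ⟨(s+t)*(1/2:F)*k1 + (s'+t')*(1/2:F)*k2, ?_⟩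
          rw [add_mul, smul_mul_assoc, smul_mul_assoc, hk1, hk2]
          module
        · rw [hxe, hye]
          simp only [mul_add, add_mul, smul_mul_assoc, mul_smul_comm, haa, hab, hba,
            hbb, ham', hbm', hma, hmb, hk, hedef]
          module
  have HH : ∀ x ∈ eigSp F a (1/2:F), ∀ y ∈ eigSp F a (1/2:F),
      ∃ k : F, x * y = k • e := by
    intro x hx
    obtain ⟨s, t, m, ⟨hmH, hmP⟩, hxe⟩ := hP x
    have h0 : s • a + t • b + (m - x) = 0 := by rw [hxe]; abel
    obtain ⟨-, -, hmx⟩ := indep3 _ _ _ (sub_mem hmH hx) h0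
    have hxm : x = m := (sub_eq_zero.mp hmx).symm
    intro y hy
    obtain ⟨k, hk⟩ := hmP y hy
    exact ⟨k, by rw [hxm]; exact hk⟩
  set V' : Submodule F A := Submodule.span F {a - b} ⊔ eigSp F a (1/2:F) with hV'
  have memV' : ∀ v ∈ V', ∃ (s : F) (h : A), h ∈ eigSp F a (1/2:F) ∧
      v = s • (a-b) + h := by
    intro v hv
    rw [hV'] at hv
    rcases Submodule.mem_sup.mp hv with ⟨u, hu, h, hh, hvu⟩
    rcases Submodule.mem_span_singleton.mp hu with ⟨s, hs⟩
    exact ⟨s, h, hh, by rw [← hvu, ← hs]⟩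
  have habab : (a - b) * (a - b) = e := by
    rw [sub_mul, mul_sub, mul_sub, haa, hab, hba, hbb, hedef]
    abel
  have habH : ∀ h ∈ eigSp F a (1/2:F), (a - b) * h = 0 := by
    intro h hh
    rw [sub_mul, mem_eigSp.mp hh, hbH h hh, sub_self]
  have VV : ∀ v ∈ V', ∀ w ∈ V', ∃ k : F, v * w = k • e := by
    intro v hv w hw
    obtain ⟨s, h, hh, hve⟩ := memV' v hv
    obtain ⟨s', h', hh', hwe⟩ := memV' w hw
    obtain ⟨k, hk⟩ := HH h hh h' hh'
    have e2 : (a-b) * h' = 0 := habH h' hh'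
    have e3 : h * (a-b) = 0 := by rw [mul_comm]; exact habH h hh
    refine ⟨s*s' + k, ?_⟩
    rw [hve, hwe]
    simp only [mul_add, add_mul, smul_mul_assoc, mul_smul_comm, habab, hk, e2, e3,
      smul_zero]
    module
  let f : (F × ↥V') →ₗ[F] A :=
  { toFun := fun p => p.1 • e + (p.2 : A)
    map_add' := by
      intro p q
      simp only [Prod.fst_add, Prod.snd_add, Submodule.coe_add, add_smul]
      abel
    map_smul' := by
      intro r p
      simp only [Prod.smul_fst, Prod.smul_snd, Submodule.coe_smul, smul_eq_mul,
        RingHom.id_apply, smul_add, smul_smul] }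
  have hfsurj : Function.Surjective f := by
    intro x
    obtain ⟨s, t, z, hz, hxd⟩ := decompA x
    have hmem : ((s-t)*(1/2:F)) • (a-b) + z ∈ V' := by
      rw [hV']
      exact Submodule.add_mem _
        (Submodule.mem_sup_left
          (Submodule.smul_mem _ _ (Submodule.mem_span_singleton_self _)))
        (Submodule.mem_sup_right hz)
    refine ⟨((s+t)*(1/2:F), ⟨((s-t)*(1/2:F)) • (a-b) + z, hmem⟩), ?_⟩
    show ((s+t)*(1/2:F)) • e + (((s-t)*(1/2:F)) • (a-b) + z) = x
    rw [hxd, hedef]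
    match_scalars
    · linear_combination s*hhalf
    · linear_combination t*hhalf
    · ring
  have hfinj : Function.Injective f := by
    rw [← LinearMap.ker_eq_bot, LinearMap.ker_eq_bot']
    rintro ⟨t, v⟩ hp
    obtain ⟨s, h, hh, hve⟩ := memV' (v:A) v.2
    have hfp : t • e + (v:A) = 0 := hp
    rw [hve, hedef] at hfp
    have h0 : (t + s) • a + (t - s) • b + h = 0 := by
      linear_combination (norm := module) hfp
    obtain ⟨h1, h2, h3⟩ := indep3 _ _ _ hh h0
    have ht0 : t = 0 := by
      have h4 : (2:F) * t = 0 := by linear_combination h1 + h2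
      rcases mul_eq_zero.mp h4 with h' | h'
      · exact absurd h' hchar
      · exact h'
    have hs0 : s = 0 := by linear_combination h1 - ht0
    have hv0 : (v:A) = 0 := by rw [hve, hs0, h3, zero_smul, zero_add]
    rw [Prod.mk_eq_zero]
    exact ⟨ht0, Subtype.ext hv0⟩
  let eLin : (F × ↥V') ≃ₗ[F] A := LinearEquiv.ofBijective f ⟨hfinj, hfsurj⟩
  have eLin_apply : ∀ p : F × ↥V', eLin p = p.1 • e + (p.2 : A) := fun p => rfl
  let Bfun : ↥V' →ₗ[F] ↥V' →ₗ[F] F := LinearMap.mk₂ F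
    (fun v w => (eLin.symm ((v:A) * (w:A))).1)
    (by intro m m' n
        simp [Submodule.coe_add, add_mul, map_add, Prod.fst_add])
    (by intro c m n
        simp [Submodule.coe_smul, smul_mul_assoc, map_smul, Prod.smul_fst,
          smul_eq_mul])
    (by intro m n n'
        simp [Submodule.coe_add, mul_add, map_add, Prod.fst_add])
    (by intro c m n
        simp [Submodule.coe_smul, mul_smul_comm, map_smul, Prod.smul_fst,
          smul_eq_mul])
  have Bfun_apply : ∀ v w : ↥V', Bfun v w = (eLin.symm ((v:A) * (w:A))).1 :=
    fun v w => rfl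
  have Bspec : ∀ v w : ↥V', (v:A) * (w:A) = (Bfun v w) • e := by
    intro v w
    obtain ⟨k, hk⟩ := VV (v:A) v.2 (w:A) w.2
    have h1 : eLin.symm ((v:A) * (w:A)) = (k, 0) := by
      rw [hk, LinearEquiv.symm_apply_eq, eLin_apply]
      simp
    have h2 : Bfun v w = k := by rw [Bfun_apply, h1]
    rw [hk, h2]
  have hmc : ∀ x y : A,
      eLin.symm (x * y) = cliffMul F Bfun (eLin.symm x) (eLin.symm y) := by
    intro x y
    rw [LinearEquiv.symm_apply_eq]
    set p := eLin.symm x with hpdef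
    set q := eLin.symm y with hqdef
    have hx : x = eLin p := (eLin.apply_symm_apply x).symm
    have hy : y = eLin q := (eLin.apply_symm_apply y).symm
    rw [eLin_apply]
    have hc1 : (cliffMul F Bfun p q).1 = p.1 * q.1 + Bfun p.2 q.2 := rfl
    have hc2 : ((cliffMul F Bfun p q).2 : A) = p.1 • (q.2:A) + q.1 • (p.2:A) := rfl
    rw [hc1, hc2, hx, hy, eLin_apply, eLin_apply]
    have he1 : e * (q.2:A) = (q.2:A) := hid _
    have he2 : (p.2:A) * e = (p.2:A) := hid' _
    have he3 : (p.2:A) * (q.2:A) = (Bfun p.2 q.2) • e := Bspec _ _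
    simp only [mul_add, add_mul, smul_mul_assoc, mul_smul_comm, hee, he1, he2, he3]
    module
  refine ⟨{ V := ↥V', B := Bfun, symm := ?_, iso := eLin.symm,
            mul_compat := hmc }⟩
  intro v w
  rw [Bfun_apply, Bfun_apply, mul_comm]
end

section
/- Let A be a primitive axial algebra of Jordan type η over a field F with char F ≠ 2. If a and b are distinct η-axes in A with τ_a = τ_b, then ab = 0. -/
universe u v

lemma aux_proj_of_fixed
    {F : Type u} {A : Type v} [Field F] [NonUnitalNonAssocCommRing A]
    [Module F A] [SMulCommClass F A A] [IsScalarTower F A A]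
    (hchar : (2 : F) ≠ 0) (η : F) (a b : A) (ha : IsAxis F η a)
    (τa : A → A) (hτa : IsMiyamoto F η a τa) (hfix : τa b = b) :
    ∃ c : F, a * b = c • a := by
  have hb : b ∈ eigSp F a 1 ⊔ eigSp F a 0 ⊔ eigSp F a η := by
    rw [ha.decomp]; exact Submodule.mem_top
  obtain ⟨p, hp, e, he, hbpe⟩ := Submodule.mem_sup.mp hb
  have h1 : τa b = p + -e := by
    rw [← hbpe, hτa.map_add, hτa.fixes p hp, hτa.negates e he]
  have he0 : e = 0 := by
    have h2 : p + e = p + -e := by rw [← h1, hfix, hbpe]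
    have h3 : e + e = 0 := by
      have h := add_left_cancel h2
      rw [eq_neg_iff_add_eq_zero] at h; exact h
    have h4 : (2 : F) • e = 0 := by rw [two_smul]; exact h3
    exact (smul_eq_zero.mp h4).resolve_left hchar
  obtain ⟨x, hx, y, hy, hpxy⟩ := Submodule.mem_sup.mp hp
  rw [ha.prim] at hx
  obtain ⟨c, hc⟩ := Submodule.mem_span_singleton.mp hx
  refine ⟨c, ?_⟩
  have hy0 : a * y = 0 := by
    have : a * y = (0 : F) • y := hy
    rwa [zero_smul] at this
  rw [← hbpe, he0, add_zero, ← hpxy, mul_add, hy0, add_zero, ← hc,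
    mul_smul_comm, ha.idem]

/-- In a primitive axial algebra of Jordan type `η`, if `a` and
`b` are distinct `η`-axes with `τ_a = τ_b`, then `ab = 0`. -/
theorem mul_eq_zero_of_same_miyamoto
    {F : Type u} {A : Type v} [Field F] [NonUnitalNonAssocCommRing A]
    [Module F A] [SMulCommClass F A A] [IsScalarTower F A A]
    (hchar : (2 : F) ≠ 0) (η : F) (hη0 : η ≠ 0) (hη1 : η ≠ 1)
    (𝒜 : Set A) (h𝒜 : ∀ a ∈ 𝒜, IsAxis F η a)
    (hgen : NonUnitalAlgebra.adjoin F 𝒜 = ⊤)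
    (a b : A) (ha : IsAxis F η a) (hb : IsAxis F η b) (hab : a ≠ b)
    (τa τb : A → A) (hτa : IsMiyamoto F η a τa) (hτb : IsMiyamoto F η b τb)
    (hττ : τa = τb) :
    a * b = 0 := by
  have hbfix : τa b = b := by
    rw [hττ]
    exact hτb.fixes b (Submodule.mem_sup_left (show b * b = (1:F) • b by
      rw [one_smul]; exact hb.idem))
  have hafix : τb a = a := by
    rw [← hττ]
    exact hτa.fixes a (Submodule.mem_sup_left (show a * a = (1:F) • a by
      rw [one_smul]; exact ha.idem))
  obtain ⟨c, hc⟩ := aux_proj_of_fixed hchar η a b ha τa hτa hbfix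
  obtain ⟨d, hd⟩ := aux_proj_of_fixed hchar η b a hb τb hτb hafix
  have hcd : c • a = d • b := by rw [← hc, ← hd, mul_comm]
  by_cases hc0 : c = 0
  · rw [hc, hc0, zero_smul]
  · exfalso
    have hd0 : d ≠ 0 := by
      rintro rfl
      rw [zero_smul] at hcd
      exact ha.ne_zero ((smul_eq_zero.mp hcd).resolve_left hc0)
    have hab' : a = (c⁻¹ * d) • b := by
      rw [mul_smul, ← hcd, smul_smul, inv_mul_cancel₀ hc0, one_smul]
    set t := c⁻¹ * d with ht
    have ht0 : t ≠ 0 := mul_ne_zero (inv_ne_zero hc0) hd0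
    have h5 : (t * t) • b = t • b := by
      have := ha.idem
      rw [hab'] at this
      rwa [smul_mul_smul_comm, hb.idem] at this
    have h6 : (t * t - t) • b = 0 := by rw [sub_smul, h5, sub_self]
    have h7 : t * t - t = 0 := by
      rcases smul_eq_zero.mp h6 with h | h
      · exact h
      · exact absurd h hb.ne_zero
    have ht1 : t = 1 := by
      have hfac : t * (t - 1) = 0 := by rw [mul_sub, mul_one]; exact h7
      rcases mul_eq_zero.mp hfac with h | h
      · exact absurd h ht0
      · exact sub_eq_zero.mp h
    rw [ht1, one_smul] at hab'
    exact hab hab'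
end
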